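/- Let P be an irreducible transition matrix on a finite state space with stationary distribution π, let α ∈ (0,1), let t ≥ 0, and suppose that for every state x and every set A with π(A) ≥ α we have P^t(x,A) ≥ α/2. Then for any sequence of sets (A_s)_{s≥0} with π(A_s) ≥ α for all s, and any starting state x, the expected hitting time E_x[τ_A] of the moving target, where τ_A = inf{s ≥ 0 : X_s ∈ A_s}, satisfies E_x[τ_A] ≤ 2t/α. -/

import Mathlib

open scoped ENNReal

/-- `surv P x A t y` is the probability that the chain with transition matrix `P`,
started at `x`, has avoided the moving target `(A s)` at all times `s ≤ t` and is at `y`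
at time `t`.  Thus `∑ y, surv P x A t y = P_x(τ_A > t)`. -/
noncomputable def surv {S : Type*} [Fintype S] [DecidableEq S]
    (P : Matrix S S ℝ≥0∞) (x : S) (A : ℕ → Finset S) : ℕ → S → ℝ≥0∞
  | 0 => fun y => if y = x ∧ y ∉ A 0 then 1 else 0
  | t + 1 => fun y => if y ∈ A (t + 1) then 0 else ∑ z, surv P x A t z * P z y

/-- Expected hitting time `E_x[τ_A]` of the moving target `(A s)`, via
`E_x[τ_A] = ∑_{t ≥ 0} P_x(τ_A > t)`. -/
noncomputable def ehit {S : Type*} [Fintype S] [DecidableEq S]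
    (P : Matrix S S ℝ≥0∞) (x : S) (A : ℕ → Finset S) : ℝ≥0∞ :=
  ∑' t : ℕ, ∑ y, surv P x A t y

section aux

variable {S : Type*} [Fintype S] [DecidableEq S]
  (P : Matrix S S ℝ≥0∞) (x : S) (A : ℕ → Finset S)

lemma pow_stoch (hstoch : ∀ a, ∑ b, P a b = 1) : ∀ k a, ∑ b, (P ^ k) a b = 1 := by
  intro k
  induction k with
  | zero => intro a; simp [Matrix.one_apply]
  | succ k ih =>
      intro a
      simp only [pow_succ, Matrix.mul_apply]
      rw [Finset.sum_comm]
      simp [← Finset.mul_sum, hstoch, ih]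

lemma surv_succ_sum_le (hstoch : ∀ a, ∑ b, P a b = 1) (s : ℕ) :
    ∑ y, surv P x A (s + 1) y ≤ ∑ y, surv P x A s y := by
  calc ∑ y, surv P x A (s + 1) y
      ≤ ∑ y, ∑ z, surv P x A s z * P z y := by
        refine Finset.sum_le_sum fun y _ => ?_
        simp only [surv]
        split_ifs
        · exact zero_le
        · exact le_rfl
    _ = ∑ z, surv P x A s z * ∑ y, P z y := by
        rw [Finset.sum_comm]; simp [Finset.mul_sum]
    _ = ∑ y, surv P x A s y := by simp [hstoch]

lemma surv_sum_le_one (hstoch : ∀ a, ∑ b, P a b = 1) : ∀ s, ∑ y, surv P x A s y ≤ 1 := by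
  intro s
  induction s with
  | zero =>
      calc ∑ y, surv P x A 0 y ≤ ∑ y, (if y = x then 1 else 0 : ℝ≥0∞) := by
            refine Finset.sum_le_sum fun y _ => ?_
            simp only [surv]
            split_ifs with h1 h2 <;> simp_all
        _ = 1 := by simp
  | succ s ih => exact (surv_succ_sum_le P x A hstoch s).trans ih

lemma surv_sum_antitone (hstoch : ∀ a, ∑ b, P a b = 1) :
    Antitone (fun s => ∑ y, surv P x A s y) :=
  antitone_nat_of_succ_le fun s => surv_succ_sum_le P x A hstoch s

lemma surv_le_pow : ∀ (u s : ℕ) (y : S),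
    surv P x A (s + u) y ≤ ∑ z, surv P x A s z * (P ^ u) z y := by
  intro u
  induction u with
  | zero =>
      intro s y
      simp [Matrix.one_apply, mul_ite, Finset.sum_ite_eq']
  | succ u ih =>
      intro s y
      have h1 : surv P x A (s + (u + 1)) y ≤ ∑ z, surv P x A (s + u) z * P z y := by
        show surv P x A ((s + u) + 1) y ≤ _
        simp only [surv]
        split_ifs
        · exact zero_le
        · exact le_rfl
      refine h1.trans ?_
      calc ∑ z, surv P x A (s + u) z * P z y
          ≤ ∑ z, (∑ w, surv P x A s w * (P ^ u) w z) * P z y :=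
            Finset.sum_le_sum fun z _ => mul_le_mul_left (ih s z) _
        _ = ∑ w, surv P x A s w * ∑ z, (P ^ u) w z * P z y := by
            simp_rw [Finset.sum_mul, mul_assoc]
            rw [Finset.sum_comm]
            simp_rw [← Finset.mul_sum]
        _ = ∑ z, surv P x A s z * (P ^ (u + 1)) z y := by
            simp [pow_succ, Matrix.mul_apply]

end aux

theorem stmt0 {S : Type*} [Fintype S] [DecidableEq S]
    (P : Matrix S S ℝ≥0∞) (π : S → ℝ≥0∞)
    (hstoch : ∀ a, ∑ b, P a b = 1)
    (hirr : ∀ a b, ∃ k, 0 < (P ^ k) a b)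
    (hstat : ∀ b, ∑ a, π a * P a b = π b) (hπ : ∑ a, π a = 1)
    (α : ℝ≥0∞) (hα0 : 0 < α) (hα1 : α < 1) (t : ℕ)
    (hmix : ∀ (x : S) (A : Finset S), α ≤ ∑ a ∈ A, π a → α / 2 ≤ ∑ a ∈ A, (P ^ t) x a)
    (A : ℕ → Finset S) (hA : ∀ s, α ≤ ∑ a ∈ A s, π a) (x : S) :
    ehit P x A ≤ 2 * t / α := by
  have hα2 : (0 : ℝ≥0∞) < α / 2 := ENNReal.div_pos hα0.ne' (by norm_num)
  rcases Nat.eq_zero_or_pos t with ht0 | ht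
  · -- t = 0 : x ∈ A s for all s, so the chain is hit immediately.
    subst ht0
    have hxA : ∀ s, x ∈ A s := by
      intro s
      have := hmix x (A s) (hA s)
      simp only [pow_zero, Matrix.one_apply] at this
      by_contra hx
      rw [Finset.sum_ite_eq, if_neg hx] at this
      exact absurd this hα2.not_ge
    have hz : ∀ s y, surv P x A s y = 0 := by
      intro s
      induction s with
      | zero =>
          intro y
          simp only [surv]
          rw [if_neg]
          rintro ⟨rfl, h⟩
          exact h (hxA 0)
      | succ s ih => intro y; simp [surv, ih]
    have : ehit P x A = 0 := by simp [ehit, hz]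
    simp [this]
  · -- main case
    set r : ℝ≥0∞ := 1 - α / 2 with hr
    have hα2le : α / 2 ≤ 1 := le_trans (ENNReal.half_le_self) hα1.le
    have hcontr : ∀ s, ∑ y, surv P x A (s + t) y ≤ r * ∑ y, surv P x A s y := by
      intro s
      obtain ⟨u, hu⟩ : ∃ u, t = u + 1 := ⟨t - 1, (Nat.succ_pred_eq_of_pos ht).symm⟩
      have hzero : ∀ y, y ∈ A (s + t) → surv P x A (s + t) y = 0 := by
        intro y hy
        have : s + t = (s + u) + 1 := by omega
        rw [this] at hy ⊢
        simp [surv, hy]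
      have htail : ∀ z, ∑ y ∈ (A (s + t))ᶜ, (P ^ t) z y ≤ r := by
        intro z
        have hsplit : ∑ y ∈ A (s + t), (P ^ t) z y + ∑ y ∈ (A (s + t))ᶜ, (P ^ t) z y = 1 := by
          rw [Finset.sum_add_sum_compl]
          exact pow_stoch P hstoch t z
        have hin : α / 2 ≤ ∑ y ∈ A (s + t), (P ^ t) z y := hmix z _ (hA _)
        have h1 : ∑ y ∈ (A (s + t))ᶜ, (P ^ t) z y = 1 - ∑ y ∈ A (s + t), (P ^ t) z y := by
          refine ENNReal.eq_sub_of_add_eq ?_ (by rw [add_comm]; exact hsplit)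
          intro h
          rw [h] at hsplit
          simp at hsplit
        rw [h1, hr]
        exact tsub_le_tsub_left hin 1
      calc ∑ y, surv P x A (s + t) y
          = ∑ y ∈ (A (s + t))ᶜ, surv P x A (s + t) y := by
            rw [← Finset.sum_add_sum_compl (A (s + t))]
            rw [Finset.sum_eq_zero hzero, zero_add]
        _ ≤ ∑ y ∈ (A (s + t))ᶜ, ∑ z, surv P x A s z * (P ^ t) z y :=
            Finset.sum_le_sum fun y _ => surv_le_pow P x A t s y
        _ = ∑ z, surv P x A s z * ∑ y ∈ (A (s + t))ᶜ, (P ^ t) z y := by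
            rw [Finset.sum_comm]
            simp [Finset.mul_sum]
        _ ≤ ∑ z, surv P x A s z * r :=
            Finset.sum_le_sum fun z _ => mul_le_mul_right (htail z) _
        _ = r * ∑ y, surv P x A s y := by rw [← Finset.sum_mul, mul_comm]
    have hgeom : ∀ k, ∑ y, surv P x A (k * t) y ≤ r ^ k := by
      intro k
      induction k with
      | zero => simpa using surv_sum_le_one P x A hstoch 0
      | succ k ih =>
          have : (k + 1) * t = k * t + t := by ring
          rw [this, pow_succ]
          calc ∑ y, surv P x A (k * t + t) y ≤ r * ∑ y, surv P x A (k * t) y := hcontr _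
            _ ≤ r * r ^ k := mul_le_mul_right ih _
            _ = r ^ k * r := mul_comm _ _
    have hbound : ∀ s, ∑ y, surv P x A s y ≤ r ^ (s / t) := by
      intro s
      have h1 : s / t * t ≤ s := Nat.div_mul_le_self s t
      exact le_trans (surv_sum_antitone P x A hstoch h1) (hgeom (s / t))
    have : NeZero t := ⟨ht.ne'⟩
    have hsum : ∑' s : ℕ, r ^ (s / t) = (t : ℝ≥0∞) * (α / 2)⁻¹ := by
      rw [← (Nat.divModEquiv t).symm.tsum_eq (fun s => r ^ (s / t))]
      have heval : ∀ p : ℕ × Fin t,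
          r ^ (((Nat.divModEquiv t).symm p : ℕ) / t) = r ^ p.1 := by
        rintro ⟨k, j⟩
        have h1 : ((Nat.divModEquiv t).symm (k, j) : ℕ) = k * t + (j : ℕ) := rfl
        have h2 : (k * t + (j : ℕ)) / t = k := by
          rw [add_comm, Nat.add_mul_div_right _ _ ht, Nat.div_eq_of_lt j.2, zero_add]
        rw [h1, h2]
      rw [tsum_congr heval]
      calc ∑' p : ℕ × Fin t, r ^ p.1
          = ∑' (k : ℕ), ∑' (_ : Fin t), r ^ k := ENNReal.tsum_prod (f := fun k _ => r ^ k)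
        _ = ∑' k : ℕ, (t : ℝ≥0∞) * r ^ k := by
            simp [tsum_fintype, Finset.sum_const, nsmul_eq_mul]
        _ = (t : ℝ≥0∞) * (1 - r)⁻¹ := by
            rw [ENNReal.tsum_mul_left, ENNReal.tsum_geometric]
        _ = (t : ℝ≥0∞) * (α / 2)⁻¹ := by
            rw [hr, ENNReal.sub_sub_cancel ENNReal.one_ne_top hα2le]
    calc ehit P x A ≤ ∑' s : ℕ, r ^ (s / t) := ENNReal.tsum_le_tsum hbound
      _ = (t : ℝ≥0∞) * (α / 2)⁻¹ := hsum
      _ = 2 * t / α := by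
          rw [ENNReal.inv_div (Or.inr (hα1.trans_le le_top).ne) (Or.inr hα0.ne'),
            div_eq_mul_inv, div_eq_mul_inv]
          ring
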